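/- arXiv:2604.26349 — 2 statements merged into one kernel-verified Lean document; each statement's English description precedes it below -/
import Mathlib

section
/- In the preemptive FIFO buffer model, let B be an initial buffer state and let S be any schedule on input σ starting from B. Then there exists a schedule S' on input σ starting from the empty buffer whose transmitted set is exactly trans(S) ∩ arrivals(σ), the set of packets transmitted by S that arrive in σ (as opposed to residing initially in B); in particular v(S') = ∑_{p ∈ trans(S) ∩ arrivals(σ)} v p. -/
/-- Arrival-phase relation: `ArrStep α K ps b b'` holds iff, starting from buffer `b`,
processing the remaining arriving packets `ps` in order (each dropped or appended to the
buffer tail), with resident packets preemptible at any point, and the buffer never holding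
more than `K` packets, can leave the buffer in state `b'` at the end of the arrival phase. -/
inductive ArrStep (α : Type*) (K : ℕ) : List α → List α → List α → Prop
  | nil (b : List α) : ArrStep α K [] b b
  | preempt {ps b₁ b₂ b' : List α} (p : α) :
      ArrStep α K ps (b₁ ++ b₂) b' → ArrStep α K ps (b₁ ++ p :: b₂) b'
  | drop {ps b b' : List α} (p : α) :
      ArrStep α K ps b b' → ArrStep α K (p :: ps) b b'
  | accept {ps b b' : List α} (p : α) :
      b.length < K → ArrStep α K ps (b ++ [p]) b' → ArrStep α K (p :: ps) b b'

/-- The buffer at the beginning of time step `i` (0-indexed), given the initial buffer `B`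
and the buffer states `mid` at the end of each arrival phase: the transmission phase of
step `i - 1` removes (and transmits) the head of the buffer. -/
def bufBefore {α : Type*} {T : ℕ} (B : List α) (mid : Fin T → List α) : ℕ → List α
  | 0 => B
  | n + 1 => if h : n < T then (mid ⟨n, h⟩).tail else []

/-- A (feasible) schedule over horizon `T` on input `σ`, starting from initial buffer `B`,
with buffer capacity `K`, described by the buffer state `mid i` at the end of the arrival
phase of each time step `i`. -/
structure Schedule (α : Type*) (K T : ℕ) (σ : Fin T → List α) (B : List α) where
  mid : Fin T → List α
  valid : ∀ i : Fin T, ArrStep α K (σ i) (bufBefore B mid i.val) (mid i)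

variable {α : Type*} [DecidableEq α]

/-- The set of packets transmitted by a schedule: at each time step whose buffer is
nonempty at the end of the arrival phase, the head packet is transmitted. -/
def Schedule.trans {K T : ℕ} {σ : Fin T → List α} {B : List α}
    (S : Schedule α K T σ B) : Finset α :=
  Finset.univ.biUnion fun i : Fin T => ((S.mid i).head?).toFinset

/-- The total value transmitted by a schedule. -/
def schedVal (v : α → ℝ) {K T : ℕ} {σ : Fin T → List α} {B : List α}
    (S : Schedule α K T σ B) : ℝ :=
  ∑ p ∈ S.trans, v p

/-- `OPT v K T σ B`: the optimal (supremum) total transmitted value over all schedules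
on input `σ` starting from buffer `B`. -/
noncomputable def OPT (v : α → ℝ) (K T : ℕ) (σ : Fin T → List α) (B : List α) : ℝ :=
  sSup {x | ∃ S : Schedule α K T σ B, x = schedVal v S}

/-- The set of packets arriving in the input `σ`. -/
def arrivals {T : ℕ} (σ : Fin T → List α) : Finset α :=
  Finset.univ.biUnion fun i : Fin T => (σ i).toFinset

/-- The total value of the packets residing in a buffer. -/
def bufVal (v : α → ℝ) (B : List α) : ℝ := (B.map v).sum

/-- The list of all packets of the instance: initial buffer contents plus all arrivals. -/
def instanceList {T : ℕ} (σ : Fin T → List α) (B : List α) : List α :=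
  B ++ ((List.finRange T).map σ).flatten

set_option linter.unusedSectionVars false


theorem ArrStep.sublist' {K : ℕ} {ps b b' : List α} (h : ArrStep α K ps b b') :
    List.Sublist b' (b ++ ps) := by
  induction h with
  | nil b => simp
  | preempt p h ih =>
      refine ih.trans (List.Sublist.append ?_ (List.Sublist.refl _))
      exact List.Sublist.append (List.Sublist.refl _) (List.sublist_cons_self _ _)
  | drop p h ih =>
      exact ih.trans (List.Sublist.append (List.Sublist.refl _) (List.sublist_cons_self _ _))
  | accept p hlen h ih =>
      refine ih.trans ?_
      simp

theorem ArrStep.filterQ {K : ℕ} {ps b b' : List α} (Q : α → Bool)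
    (h : ArrStep α K ps b b') : ArrStep α K ps (b.filter Q) (b'.filter Q) := by
  induction h with
  | nil b => exact ArrStep.nil _
  | preempt p h ih =>
      rename_i ps b₁ b₂ b'
      by_cases hp : Q p
      · have e : (List.filter Q (b₁ ++ p :: b₂)) = b₁.filter Q ++ p :: b₂.filter Q := by
          simp [List.filter_append, hp]
        rw [e]
        exact ArrStep.preempt p (by simpa [List.filter_append] using ih)
      · have e : (List.filter Q (b₁ ++ p :: b₂)) = List.filter Q (b₁ ++ b₂) := by
          simp [List.filter_append, hp]
        rw [e]; exact ih
  | drop p h ih => exact ArrStep.drop p ih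
  | accept p hlen h ih =>
      by_cases hp : Q p
      · refine ArrStep.accept p (lt_of_le_of_lt (List.length_filter_le _ _) hlen) ?_
        simpa [List.filter_append, hp] using ih
      · refine ArrStep.drop p ?_
        simpa [List.filter_append, hp] using ih

theorem key1 : ∀ (l : List α), l.Nodup → ∀ (Q Q' : α → Bool),
    (∀ p, Q' p = (Q p && !(decide ((l.filter Q).head? = some p)))) →
    l.filter Q' = (l.filter Q).tail := by
  intro l
  induction l with
  | nil => intro _ Q Q' _; rfl
  | cons x t ih =>
      intro hnd Q Q' hQ
      by_cases hx : Q x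
      · have hhd : ((x :: t).filter Q).head? = some x := by simp [hx]
        have hQ'x : Q' x = false := by rw [hQ x, hhd]; simp
        have : t.filter Q' = t.filter Q := by
          apply List.filter_congr
          intro p hp
          have hpx : p ≠ x := fun h => (List.nodup_cons.mp hnd).1 (h ▸ hp)
          rw [hQ p, hhd]
          simp [Ne.symm hpx]
        simp [List.filter_cons, hx, hQ'x, this]
      · have hhd : ((x :: t).filter Q).head? = (t.filter Q).head? := by
          simp [List.filter_cons, hx]
        have hQ'x : Q' x = false := by rw [hQ x]; simp [hx]
        have := ih (List.nodup_cons.mp hnd).2 Q Q' (fun p => by rw [hQ p, hhd])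
        simp [List.filter_cons, hx, hQ'x, this]

theorem key2 (l : List α) (Q Q' : α → Bool)
    (hQ : ∀ p, Q' p = (Q p && !(decide ((l.filter Q).head? = some p)))) :
    l.tail.filter Q' = l.filter Q' := by
  cases l with
  | nil => rfl
  | cons x t =>
      have hQ'x : Q' x = false := by
        by_cases hx : Q x
        · rw [hQ x]; simp [List.filter_cons, hx]
        · rw [hQ x]; simp [hx]
      simp [List.filter_cons, hQ'x]

theorem head_filter (l : List α) (Q : α → Bool) (p : α) (h : l.head? = some p)
    (hp : Q p = true) : (l.filter Q).head? = some p := by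
  cases l with
  | nil => simp at h
  | cons x t => simp at h; subst h; simp [List.filter_cons, hp]

/-- extend the mid function of a schedule to all of ℕ -/
def midAt {K T : ℕ} {σ : Fin T → List α} {B : List α} (S : Schedule α K T σ B) (n : ℕ) :
    List α :=
  if h : n < T then S.mid ⟨n, h⟩ else []

/-- packets transmitted by the constructed empty-start schedule before step n -/
def fDone (A : Finset α) (m : ℕ → List α) : ℕ → Finset α
  | 0 => ∅
  | n + 1 => fDone A m n ∪
      ((m n).filter (fun p => decide (p ∈ A ∧ p ∉ fDone A m n))).head?.toFinset


/-- For any schedule `S` on input `σ` starting from buffer `B`, there exists a schedule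
`S'` on `σ` starting from the empty buffer whose transmitted set is exactly
`trans(S) ∩ arrivals(σ)` (the packets transmitted by `S` that arrive in `σ`, as opposed
to those initially resident in `B`); in particular
`v(S') = ∑_{p ∈ trans(S) ∩ arrivals(σ)} v p`. -/
theorem exists_emptyStart_schedule_trans_eq
    (v : α → ℝ) (hv : ∀ p, 0 ≤ v p) (K T : ℕ)
    (σ : Fin T → List α) (B : List α)
    (hB : B.length ≤ K) (hnd : (instanceList σ B).Nodup)
    (S : Schedule α K T σ B) :
    ∃ S' : Schedule α K T σ [],
      S'.trans = S.trans ∩ arrivals σ ∧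
      schedVal v S' = ∑ p ∈ S.trans ∩ arrivals σ, v p := by
  classical
  set A : Finset α := S.trans ∩ arrivals σ with hA
  set m : ℕ → List α := midAt S with hm
  set Q : ℕ → α → Bool := fun n p => decide (p ∈ A ∧ p ∉ fDone A m n) with hQdef
  set mid' : ℕ → List α := fun n => (m n).filter (Q n) with hmid'
  -- disjointness of B from arrivals
  have hBdisj : ∀ p ∈ B, p ∉ arrivals σ := by
    intro p hp harr
    have hdisj := (List.nodup_append'.mp hnd).2.2
    refine hdisj hp ?_
    simp only [arrivals, Finset.mem_biUnion, Finset.mem_univ, List.mem_toFinset,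
      true_and] at harr
    obtain ⟨i, hi⟩ := harr
    simp only [List.mem_flatten, List.mem_map, List.mem_finRange]
    exact ⟨σ i, ⟨i, trivial, rfl⟩, hi⟩
  -- nodup invariant
  have hrest : ∀ n (hn : n < T),
      ((((List.finRange T).drop n).map σ).flatten : List α) =
        σ ⟨n, hn⟩ ++ (((List.finRange T).drop (n+1)).map σ).flatten := by
    intro n hn
    have hlen : n < (List.finRange T).length := by simpa using hn
    rw [List.drop_eq_getElem_cons hlen]
    simp
  have hinv : ∀ n, (bufBefore B S.mid n ++ (((List.finRange T).drop n).map σ).flatten).Nodup := by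
    intro n
    induction n with
    | zero => simpa [instanceList, bufBefore] using hnd
    | succ n ih =>
        by_cases hn : n < T
        · have h1 : List.Sublist (S.mid ⟨n, hn⟩) (bufBefore B S.mid n ++ σ ⟨n, hn⟩) :=
            (S.valid ⟨n, hn⟩).sublist'
          have h2 : List.Sublist
              ((S.mid ⟨n, hn⟩) ++ (((List.finRange T).drop (n+1)).map σ).flatten)
              (bufBefore B S.mid n ++ (((List.finRange T).drop n).map σ).flatten) := by
            rw [hrest n hn, ← List.append_assoc]
            exact List.Sublist.append h1 (List.Sublist.refl _)
          have h3 : List.Sublist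
              ((S.mid ⟨n, hn⟩).tail ++ (((List.finRange T).drop (n+1)).map σ).flatten)
              ((S.mid ⟨n, hn⟩) ++ (((List.finRange T).drop (n+1)).map σ).flatten) :=
            List.Sublist.append (List.tail_sublist _) (List.Sublist.refl _)
          have : bufBefore B S.mid (n+1) = (S.mid ⟨n, hn⟩).tail := by
            simp [bufBefore, hn]
          rw [this]
          exact (h3.trans h2).nodup ih
        · have h0 : bufBefore B S.mid (n+1) = [] := by simp [bufBefore, hn]
          have h1 : ((List.finRange T).drop (n+1)) = [] := by
            apply List.drop_eq_nil_of_le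
            simp; omega
          simp [h0, h1]
  have hnodm : ∀ n, (m n).Nodup := by
    intro n
    by_cases hn : n < T
    · have h1 : List.Sublist (S.mid ⟨n, hn⟩) (bufBefore B S.mid n ++ σ ⟨n, hn⟩) :=
        (S.valid ⟨n, hn⟩).sublist'
      have h2 := hinv n
      rw [hrest n hn, ← List.append_assoc] at h2
      have := h1.nodup (List.Nodup.of_append_left h2)
      simpa [hm, midAt, hn] using this
    · simp [hm, midAt, hn]
  -- relation between successive Q's
  have hQrel : ∀ n p, Q (n+1) p = (Q n p && !(decide (((m n).filter (Q n)).head? = some p))) := by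
    intro n p
    simp only [hQdef, ← decide_not, ← Bool.decide_and]
    rw [decide_eq_decide]
    constructor
    · rintro ⟨hpA, hpf⟩
      refine ⟨⟨hpA, fun hc => hpf ?_⟩, fun hc => hpf ?_⟩
      · exact Finset.mem_union_left _ hc
      · exact Finset.mem_union_right _ (Option.mem_toFinset.mpr (Option.mem_def.mpr hc))
    · rintro ⟨⟨hpA, hpf⟩, hh⟩
      refine ⟨hpA, fun hc => ?_⟩
      rcases Finset.mem_union.mp hc with hc | hc
      · exact hpf hc
      · exact hh (by simpa [Option.mem_toFinset, Option.mem_def] using hc)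
  -- the buffer of the new schedule
  have hE : ∀ n, n ≤ T →
      bufBefore ([] : List α) (fun i : Fin T => mid' i.val) n =
        (bufBefore B S.mid n).filter (Q n) := by
    intro n hn
    match n with
    | 0 =>
        symm
        simp only [bufBefore]
        rw [List.filter_eq_nil_iff]
        intro p hp
        simp only [hQdef, decide_eq_true_eq, not_and, not_not]
        intro hpA
        exact absurd (Finset.mem_inter.mp hpA).2 (hBdisj p hp)
    | n + 1 =>
        have hnT : n < T := hn
        have e1 : bufBefore ([] : List α) (fun i : Fin T => mid' i.val) (n+1)
            = (mid' n).tail := by simp [bufBefore, hnT]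
        have e2 : bufBefore B S.mid (n+1) = (m n).tail := by
          simp [bufBefore, hnT, hm, midAt]
        rw [e1, e2, key2 (m n) (Q n) (Q (n+1)) (hQrel n),
          key1 (m n) (hnodm n) (Q n) (Q (n+1)) (hQrel n)]
  -- the new schedule
  have hvalid : ∀ i : Fin T, ArrStep α K (σ i)
      (bufBefore ([] : List α) (fun i : Fin T => mid' i.val) i.val) (mid' i.val) := by
    intro i
    have e3 : mid' i.val = (S.mid i).filter (Q i.val) := by
      simp [hmid', hm, midAt, i.isLt]
    rw [hE i.val (le_of_lt i.isLt), e3]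
    exact (S.valid i).filterQ (Q i.val)
  set S' : Schedule α K T σ [] := ⟨fun i : Fin T => mid' i.val, hvalid⟩ with hS'
  have htrans : S'.trans = S.trans ∩ arrivals σ := by
    have fsub : ∀ n, ∀ q ∈ fDone A m n, ∃ k, k < n ∧ (mid' k).head? = some q := by
      intro n
      induction n with
      | zero => intro q hq; simp [fDone] at hq
      | succ n ih =>
          intro q hq
          rcases Finset.mem_union.mp hq with hq | hq
          · obtain ⟨k, hk, hh⟩ := ih q hq
            exact ⟨k, Nat.lt_succ_of_lt hk, hh⟩
          · refine ⟨n, Nat.lt_succ_self n, ?_⟩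
            simpa [hmid', hQdef, Option.mem_toFinset, Option.mem_def] using hq
    ext p
    simp only [Schedule.trans, Finset.mem_biUnion, Finset.mem_univ, true_and,
      Option.mem_toFinset, Option.mem_def]
    constructor
    · rintro ⟨i, hi⟩
      have hpmem : p ∈ mid' i.val := List.mem_of_mem_head? (by simpa using hi)
      have := (List.mem_filter.mp hpmem).2
      simp only [hQdef, decide_eq_true_eq] at this
      exact this.1
    · intro hp
      have hpA : p ∈ A := hp
      obtain ⟨j, hj⟩ : ∃ j : Fin T, (S.mid j).head? = some p := by
        have := (Finset.mem_inter.mp hp).1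
        simp only [Schedule.trans, Finset.mem_biUnion, Finset.mem_univ, true_and,
          Option.mem_toFinset, Option.mem_def] at this
        exact this
      by_cases hf : p ∈ fDone A m j.val
      · obtain ⟨k, hk, hh⟩ := fsub j.val p hf
        exact ⟨⟨k, lt_trans hk j.isLt⟩, hh⟩
      · refine ⟨j, ?_⟩
        have hmj : m j.val = S.mid j := by simp [hm, midAt, j.isLt]
        have hQp : Q j.val p = true := by
          simp only [hQdef, decide_eq_true_eq]
          exact ⟨hpA, hf⟩
        show (mid' j.val).head? = some p
        simpa [hmid', hmj] using head_filter (S.mid j) (Q j.val) p hj hQp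
  exact ⟨S', htrans, by rw [schedVal, htrans]⟩
end

section
/- OPT Comparison Lemma: In the preemptive FIFO buffer model, for every initial buffer state B and every input σ, OPT(∅,σ) − v(B) ≤ OPT(B,σ) ≤ OPT(∅,σ) + v(B), where v(B) = |v(B) − v(∅)| is the total resident value of the initial buffer; that is, the optimal values starting from buffer B and from the empty buffer differ by at most the additive constant v(B). -/
variable {α : Type*} [DecidableEq α]

set_option linter.unusedSectionVars false
set_option linter.unnecessarySimpa false

section Aux
variable {K : ℕ}

lemma arrStep_refl (ps b : List α) : ArrStep α K ps b b := by
  induction ps with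
  | nil => exact ArrStep.nil b
  | cons p ps ih => exact ArrStep.drop p ih

lemma arrStep_cons {ps b b' : List α} (q : α) (h : ArrStep α K ps b b') :
    ArrStep α K ps (q :: b) b' := by
  have := ArrStep.preempt (b₁ := ([] : List α)) (b₂ := b) q (by simpa using h)
  simpa using this

lemma arrStep_of_nil {ps b' : List α} (h : ArrStep α K ps [] b') (c : List α) :
    ArrStep α K ps c b' := by
  induction c with
  | nil => exact h
  | cons q c ih => exact arrStep_cons q ih

lemma arrStep_sublist {ps b b' : List α} (h : ArrStep α K ps b b') :
    b'.Sublist (b ++ ps) := by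
  induction h with
  | nil b => simpa using List.Sublist.refl b
  | preempt p h ih =>
      exact ih.trans (List.Sublist.append_right
        ((List.sublist_cons_self p _).append_left _) _)
  | drop p h ih =>
      exact ih.trans (((List.sublist_cons_self p _).append_left _))
  | accept p hK h ih =>
      exact ih.trans (by rw [List.append_assoc]; simp)

lemma arrStep_sub {ps b b' : List α} (h : ArrStep α K ps b b') :
    (b ++ ps).Nodup → ∀ c, c.Sublist b → ∃ c', c'.Sublist b' ∧ ArrStep α K ps c c' ∧
      ∀ x ∈ b', x ∉ c' → x ∈ b ∧ x ∉ c := by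
  induction h with
  | nil b =>
      intro _ c hc
      exact ⟨c, hc, ArrStep.nil c, fun x hx hx' => ⟨by simpa using hx, hx'⟩⟩
  | @preempt ps b₁ b₂ b' p h ih =>
      intro hnd c hc
      have hsub : ((b₁ ++ b₂) ++ ps).Sublist ((b₁ ++ p :: b₂) ++ ps) :=
        List.Sublist.append_right ((List.sublist_cons_self p _).append_left _) _
      have hnd' : ((b₁ ++ b₂) ++ ps).Nodup := hnd.sublist hsub
      have hp : p ∉ b₁ ++ b₂ := by
        have : (b₁ ++ p :: b₂).Nodup := hnd.sublist (List.sublist_append_left _ _)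
        intro hmem
        rcases List.mem_append.mp hmem with h1 | h2
        · exact (List.disjoint_of_nodup_append this) h1 List.mem_cons_self
        · have := (List.nodup_append'.mp this).2.1
          exact (List.nodup_cons.mp this).1 h2
      rcases List.sublist_append_iff.mp hc with ⟨c₁, c₂, rfl, h₁, h₂⟩
      rcases List.sublist_cons_iff.mp h₂ with h₂' | ⟨r, rfl, hr⟩
      · obtain ⟨c', hs, ha, hmiss⟩ := ih hnd' (c₁ ++ c₂) (h₁.append h₂')
        refine ⟨c', hs, ha, fun x hx hx' => ?_⟩
        obtain ⟨hxb, hxc⟩ := hmiss x hx hx'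
        refine ⟨?_, hxc⟩
        rcases List.mem_append.mp hxb with h1 | h2
        · exact List.mem_append.mpr (Or.inl h1)
        · exact List.mem_append.mpr (Or.inr (List.mem_cons_of_mem _ h2))
      · obtain ⟨c', hs, ha, hmiss⟩ := ih hnd' (c₁ ++ r) (h₁.append hr)
        refine ⟨c', hs, ArrStep.preempt p ha, fun x hx hx' => ?_⟩
        obtain ⟨hxb, hxc⟩ := hmiss x hx hx'
        have hxp : x ≠ p := fun e => hp (e ▸ hxb)
        constructor
        · rcases List.mem_append.mp hxb with h1 | h2
          · exact List.mem_append.mpr (Or.inl h1)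
          · exact List.mem_append.mpr (Or.inr (List.mem_cons_of_mem _ h2))
        · intro hmem
          apply hxc
          rcases List.mem_append.mp hmem with h1 | h2
          · exact List.mem_append.mpr (Or.inl h1)
          · rcases List.mem_cons.mp h2 with h3 | h4
            · exact absurd h3 hxp
            · exact List.mem_append.mpr (Or.inr h4)
  | @drop ps b b' p h ih =>
      intro hnd c hc
      have hnd' : (b ++ ps).Nodup :=
        hnd.sublist (((List.sublist_cons_self p _)).append_left _)
      obtain ⟨c', hs, ha, hm⟩ := ih hnd' c hc
      exact ⟨c', hs, ArrStep.drop p ha, hm⟩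
  | @accept ps b b' p hK h ih =>
      intro hnd c hc
      have hnd' : ((b ++ [p]) ++ ps).Nodup := by
        simpa [List.append_assoc] using hnd
      obtain ⟨c', hs, ha, hm⟩ := ih hnd' (c ++ [p]) (hc.append (List.Sublist.refl [p]))
      refine ⟨c', hs, ArrStep.accept p (lt_of_le_of_lt hc.length_le hK) ha, ?_⟩
      intro x hx hx'
      obtain ⟨hxb, hxc⟩ := hm x hx hx'
      have hxp : x ≠ p := by
        intro e; exact hxc (List.mem_append.mpr (Or.inr (by simp [e])))
      constructor
      · rcases List.mem_append.mp hxb with h1 | h2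
        · exact h1
        · exact absurd (by simpa using h2) hxp
      · intro hmem; exact hxc (List.mem_append.mpr (Or.inl hmem))

end Aux


section Chain
variable {K T : ℕ} {σ : Fin T → List α} {B : List α}

/-- Remaining arrivals from step `n` on. -/
def restArr {T : ℕ} (σ : Fin T → List α) (n : ℕ) : List α :=
  (((List.finRange T).map σ).drop n).flatten

lemma restArr_succ (n : ℕ) (hn : n < T) :
    restArr σ n = σ ⟨n, hn⟩ ++ restArr σ (n + 1) := by
  unfold restArr
  rw [List.drop_eq_getElem_cons (by simpa using hn)]
  simp

lemma chain (S : Schedule α K T σ B) :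
    ∀ n, (hn : n < T) →
      (bufBefore B S.mid n ++ restArr σ n).Sublist (instanceList σ B) ∧
      (S.mid ⟨n, hn⟩ ++ restArr σ (n + 1)).Sublist (instanceList σ B) := by
  intro n
  induction n with
  | zero =>
      intro h0
      have h1 : (bufBefore B S.mid 0 ++ restArr σ 0).Sublist (instanceList σ B) := by
        show (B ++ restArr σ 0).Sublist (instanceList σ B)
        unfold restArr instanceList
        simp
      refine ⟨h1, ?_⟩
      have hmid : (S.mid ⟨0, h0⟩).Sublist (bufBefore B S.mid 0 ++ σ ⟨0, h0⟩) :=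
        arrStep_sublist (S.valid ⟨0, h0⟩)
      have hstep : (S.mid ⟨0, h0⟩ ++ restArr σ 1).Sublist
          (bufBefore B S.mid 0 ++ restArr σ 0) := by
        rw [restArr_succ 0 h0, ← List.append_assoc]
        exact hmid.append_right _
      exact hstep.trans h1
  | succ n ih =>
      intro h1
      have hn : n < T := Nat.lt_of_succ_lt h1
      obtain ⟨-, ihm⟩ := ih hn
      have hbuf : bufBefore B S.mid (n + 1) = (S.mid ⟨n, hn⟩).tail := by
        simp [bufBefore, hn]
      have hfirst : (bufBefore B S.mid (n + 1) ++ restArr σ (n + 1)).Sublist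
          (instanceList σ B) := by
        rw [hbuf]
        exact (((S.mid ⟨n, hn⟩).tail_sublist).append_right _).trans ihm
      refine ⟨hfirst, ?_⟩
      have hmid : (S.mid ⟨n + 1, h1⟩).Sublist
          (bufBefore B S.mid (n + 1) ++ σ ⟨n + 1, h1⟩) :=
        arrStep_sublist (S.valid ⟨n + 1, h1⟩)
      have hstep : (S.mid ⟨n + 1, h1⟩ ++ restArr σ (n + 2)).Sublist
          (bufBefore B S.mid (n + 1) ++ restArr σ (n + 1)) := by
        rw [restArr_succ (n + 1) h1, ← List.append_assoc]
        exact hmid.append_right _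
      exact hstep.trans hfirst

lemma nodup_buf_arr (S : Schedule α K T σ B) (hnd : (instanceList σ B).Nodup)
    (n : ℕ) (hn : n < T) : (bufBefore B S.mid n ++ σ ⟨n, hn⟩).Nodup := by
  have h1 := (chain S n hn).1
  have h2 : (bufBefore B S.mid n ++ σ ⟨n, hn⟩).Sublist
      (bufBefore B S.mid n ++ restArr σ n) := by
    apply List.Sublist.append_left
    rw [restArr_succ n hn]
    exact List.sublist_append_left _ _
  exact hnd.sublist (h2.trans h1)

lemma nodup_mid (S : Schedule α K T σ B) (hnd : (instanceList σ B).Nodup)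
    (i : Fin T) : (S.mid i).Nodup := by
  have := nodup_buf_arr S hnd i.val i.isLt
  exact this.sublist (by simpa using arrStep_sublist (S.valid ⟨i.val, i.isLt⟩))

lemma mid_subset (S : Schedule α K T σ B) (i : Fin T) :
    ∀ x ∈ S.mid i, x ∈ instanceList σ B := by
  intro x hx
  have h2 := (chain S i.val i.isLt).2
  exact h2.mem (by simpa using List.mem_append.mpr (Or.inl hx))

lemma schedVal_le_total (v : α → ℝ) (hv : ∀ p, 0 ≤ v p) (S : Schedule α K T σ B) :
    schedVal v S ≤ ∑ p ∈ (instanceList σ B).toFinset, v p := by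
  apply Finset.sum_le_sum_of_subset_of_nonneg
  · intro p hp
    simp only [Schedule.trans, Finset.mem_biUnion, Finset.mem_univ, true_and,
      Option.mem_toFinset, Option.mem_def] at hp
    obtain ⟨i, hi⟩ := hp
    have : p ∈ S.mid i := by
      cases h : S.mid i with
      | nil => simp [h] at hi
      | cons a t => simp [h] at hi; simp [h, hi]
    simpa using mid_subset S i p this
  · intro p _ _; exact hv p

lemma trivial_schedule (K T : ℕ) (σ : Fin T → List α) (B : List α) :
    Nonempty (Schedule α K T σ B) := by
  refine ⟨⟨fun i => B.drop i.val, fun i => ?_⟩⟩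
  have heq : bufBefore B (fun i : Fin T => B.drop i.val) i.val = B.drop i.val := by
    rcases i with ⟨iv, hi⟩
    cases iv with
    | zero => rfl
    | succ n =>
        have hn : n < T := Nat.lt_of_succ_lt hi
        simp [bufBefore, hn, List.tail_drop]
  rw [heq]
  exact arrStep_refl _ _

lemma opt_set_nonempty (v : α → ℝ) (K T : ℕ) (σ : Fin T → List α) (B : List α) :
    {x | ∃ S : Schedule α K T σ B, x = schedVal v S}.Nonempty := by
  obtain ⟨S⟩ := trivial_schedule (α := α) K T σ B
  exact ⟨schedVal v S, S, rfl⟩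

lemma opt_set_bddAbove (v : α → ℝ) (hv : ∀ p, 0 ≤ v p) (K T : ℕ)
    (σ : Fin T → List α) (B : List α) :
    BddAbove {x | ∃ S : Schedule α K T σ B, x = schedVal v S} := by
  refine ⟨∑ p ∈ (instanceList σ B).toFinset, v p, ?_⟩
  rintro x ⟨S, rfl⟩
  exact schedVal_le_total v hv S

end Chain

section Sim
variable {T : ℕ}

/-- Invariant for step `n` of the simulation: `c'` is a valid arrival-phase result from
previous buffer `pbuf`, is a sublist of `mid n`, and all missing packets were already
missing before the step. -/
def simP (K : ℕ) (σ : Fin T → List α) (B : List α) (mid : Fin T → List α)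
    (n : ℕ) (pbuf c' : List α) : Prop :=
  ∀ hn : n < T, c'.Sublist (mid ⟨n, hn⟩) ∧ ArrStep α K (σ ⟨n, hn⟩) pbuf c' ∧
    ∀ x ∈ mid ⟨n, hn⟩, x ∉ c' → x ∈ bufBefore B mid n ∧ x ∉ pbuf

open Classical in
noncomputable def simPick (K : ℕ) (σ : Fin T → List α) (B : List α)
    (mid : Fin T → List α) (n : ℕ) (pbuf : List α) : List α :=
  if h : ∃ c', simP K σ B mid n pbuf c' then h.choose else []

noncomputable def simF (K : ℕ) (σ : Fin T → List α) (B : List α)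
    (mid : Fin T → List α) : ℕ → List α
  | 0 => simPick K σ B mid 0 []
  | n + 1 => simPick K σ B mid (n + 1) (simF K σ B mid n).tail

/-- Buffer of the simulated schedule before step `n`. -/
noncomputable def simPb (K : ℕ) (σ : Fin T → List α) (B : List α)
    (mid : Fin T → List α) : ℕ → List α
  | 0 => []
  | n + 1 => (simF K σ B mid n).tail

lemma simPick_spec {K : ℕ} {σ : Fin T → List α} {B : List α} {mid : Fin T → List α}
    {n : ℕ} {pbuf : List α} (h : ∃ c', simP K σ B mid n pbuf c') :
    simP K σ B mid n pbuf (simPick K σ B mid n pbuf) := by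
  unfold simPick
  rw [dif_pos h]
  exact h.choose_spec

end Sim

/-- OPT Comparison Lemma: the optimal values starting from buffer `B` and from the empty
buffer differ by at most the additive constant `ε = v(B) = |v(B) - v(∅)|`, the total
resident value of the initial buffer:
`OPT(∅, σ) − v(B) ≤ OPT(B, σ) ≤ OPT(∅, σ) + v(B)`. -/
theorem OPT_comparison
    (v : α → ℝ) (hv : ∀ p, 0 ≤ v p) (K T : ℕ)
    (σ : Fin T → List α) (B : List α)
    (hB : B.length ≤ K) (hnd : (instanceList σ B).Nodup) :
    OPT v K T σ [] - bufVal v B ≤ OPT v K T σ B ∧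
      OPT v K T σ B ≤ OPT v K T σ [] + bufVal v B := by
  classical
  have hbd_B := opt_set_bddAbove v hv K T σ B
  have hbd_0 := opt_set_bddAbove v hv K T σ []
  have hne_B := opt_set_nonempty v K T σ B
  have hne_0 := opt_set_nonempty v K T σ []
  have hbv : 0 ≤ bufVal v B := by
    apply List.sum_nonneg
    intro x hx
    obtain ⟨p, -, rfl⟩ := List.mem_map.mp hx
    exact hv p
  have hBnodup : B.Nodup :=
    hnd.sublist (List.sublist_append_left B _ : B.Sublist (instanceList σ B))
  have h2 : OPT v K T σ [] ≤ OPT v K T σ B := by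
    apply csSup_le hne_0
    rintro x ⟨S, rfl⟩
    have hval : ∀ i : Fin T, ArrStep α K (σ i) (bufBefore B S.mid i.val) (S.mid i) := by
      rintro ⟨iv, hi⟩
      cases iv with
      | zero => exact arrStep_of_nil (S.valid ⟨0, hi⟩) B
      | succ n => exact S.valid ⟨n + 1, hi⟩
    exact le_csSup hbd_B ⟨⟨S.mid, hval⟩, rfl⟩
  have h1 : OPT v K T σ B ≤ OPT v K T σ [] + bufVal v B := by
    apply csSup_le hne_B
    rintro x ⟨S, rfl⟩
    set g := simF K σ B S.mid with hg
    set pb := simPb K σ B S.mid with hpbdef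
    have hpb0 : pb 0 = [] := rfl
    have hpbs : ∀ n, pb (n + 1) = (g n).tail := fun n => rfl
    have hgs : ∀ n, g n = simPick K σ B S.mid n (pb n) := by
      intro n; cases n <;> rfl
    have hex : ∀ n, (n < T → (pb n).Sublist (bufBefore B S.mid n)) →
        ∃ c', simP K σ B S.mid n (pb n) c' := by
      intro n hsub
      by_cases hn : n < T
      · obtain ⟨c', hs, ha, hm⟩ :=
          arrStep_sub (S.valid ⟨n, hn⟩) (nodup_buf_arr S hnd n hn) (pb n) (hsub hn)
        exact ⟨c', fun hn' => ⟨hs, ha, hm⟩⟩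
      · exact ⟨[], fun hn' => absurd hn' hn⟩
    have key : ∀ n, (n < T → (pb n).Sublist (bufBefore B S.mid n)) ∧
        simP K σ B S.mid n (pb n) (g n) := by
      intro n
      induction n with
      | zero =>
          have hsub : ∀ _ : 0 < T, (pb 0).Sublist (bufBefore B S.mid 0) := by
            intro _; rw [hpb0]; exact List.nil_sublist _
          exact ⟨hsub, by rw [hgs 0]; exact simPick_spec (hex 0 hsub)⟩
      | succ n ih =>
          obtain ⟨ihsub, ihP⟩ := ih
          have hsub : n + 1 < T → (pb (n + 1)).Sublist (bufBefore B S.mid (n + 1)) := by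
            intro h1
            have hn : n < T := Nat.lt_of_succ_lt h1
            have hfs : (g n).Sublist (S.mid ⟨n, hn⟩) := (ihP hn).1
            have hb : bufBefore B S.mid (n + 1) = (S.mid ⟨n, hn⟩).tail := by
              simp [bufBefore, hn]
            rw [hpbs n, hb]
            exact hfs.tail
          exact ⟨hsub, by rw [hgs (n + 1)]; exact simPick_spec (hex (n + 1) hsub)⟩
    have hval' : ∀ i : Fin T,
        ArrStep α K (σ i) (bufBefore [] (fun j : Fin T => g j.val) i.val) (g i.val) := by
      rintro ⟨iv, hi⟩
      have hP := (key iv).2 hi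
      have hbe : bufBefore ([] : List α) (fun j : Fin T => g j.val) iv = pb iv := by
        cases iv with
        | zero => rfl
        | succ m =>
            have hm : m < T := Nat.lt_of_succ_lt hi
            simp [bufBefore, hm, hpbs m]
      show ArrStep α K (σ ⟨iv, hi⟩) (bufBefore [] (fun j : Fin T => g j.val) iv) (g iv)
      rw [hbe]
      exact hP.2.1
    let S' : Schedule α K T σ [] := ⟨fun j => g j.val, hval'⟩
    have claimA : ∀ n, ∀ hn : n < T, ∀ x ∈ S.mid ⟨n, hn⟩, x ∉ g n →
        x ∈ B ∨ ∃ j : Fin T, (g j.val).head? = some x := by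
      intro n
      induction n using Nat.strong_induction_on with
      | _ n IH =>
        intro hn x hx hxg
        obtain ⟨hxbuf, hxpb⟩ := ((key n).2 hn).2.2 x hx hxg
        cases n with
        | zero => exact Or.inl hxbuf
        | succ m =>
            have hm : m < T := Nat.lt_of_succ_lt hn
            have hb : bufBefore B S.mid (m + 1) = (S.mid ⟨m, hm⟩).tail := by
              simp [bufBefore, hm]
            rw [hb] at hxbuf
            rw [hpbs m] at hxpb
            by_cases hxf : x ∈ g m
            · right
              refine ⟨⟨m, hm⟩, ?_⟩
              show (g m).head? = some x
              cases hfm : g m with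
              | nil => rw [hfm] at hxf; simp at hxf
              | cons a t =>
                  rw [hfm] at hxf hxpb
                  rcases List.mem_cons.mp hxf with h | h
                  · simp [h]
                  · exact absurd h (by simpa using hxpb)
            · exact IH m (Nat.lt_succ_self m) hm x (List.mem_of_mem_tail hxbuf) hxf
    have htrans : S.trans ⊆ S'.trans ∪ B.toFinset := by
      intro p hp
      simp only [Schedule.trans, Finset.mem_biUnion, Finset.mem_univ, true_and,
        Option.mem_toFinset, Option.mem_def] at hp
      obtain ⟨i, hi⟩ := hp
      by_cases hpB : p ∈ B
      · exact Finset.mem_union_right _ (List.mem_toFinset.mpr hpB)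
      · obtain ⟨t, hmid⟩ : ∃ t, S.mid i = p :: t := by
          cases h : S.mid i with
          | nil => rw [h] at hi; simp at hi
          | cons a t => rw [h] at hi; simp at hi; exact ⟨t, by rw [hi]⟩
        have hmemS' : ∃ j : Fin T, (g j.val).head? = some p := by
          by_cases hpf : p ∈ g i.val
          · refine ⟨i, ?_⟩
            have hfs : (g i.val).Sublist (S.mid ⟨i.val, i.isLt⟩) := ((key i.val).2 i.isLt).1
            have hndm : (S.mid i).Nodup := nodup_mid S hnd i
            have hι : (⟨i.val, i.isLt⟩ : Fin T) = i := rfl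
            rw [hι, hmid] at hfs
            rw [hmid] at hndm
            cases hf : g i.val with
            | nil => rw [hf] at hpf; simp at hpf
            | cons a t' =>
                rw [hf] at hfs hpf
                rcases List.sublist_cons_iff.mp hfs with hcase | ⟨r, heq, hr⟩
                · exfalso
                  exact (List.nodup_cons.mp hndm).1 (hcase.mem hpf)
                · have ha : a = p := (List.cons_eq_cons.mp heq).1
                  simp [ha]
          · have hpmem : p ∈ S.mid ⟨i.val, i.isLt⟩ := by
              rw [show (⟨i.val, i.isLt⟩ : Fin T) = i from rfl, hmid]
              exact List.mem_cons_self
            rcases claimA i.val i.isLt p hpmem hpf with hB' | hj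
            · exact absurd hB' hpB
            · exact hj
        obtain ⟨j, hj⟩ := hmemS'
        apply Finset.mem_union_left
        simp only [Schedule.trans, Finset.mem_biUnion, Finset.mem_univ, true_and,
          Option.mem_toFinset, Option.mem_def]
        exact ⟨j, hj⟩
    have hS'le : schedVal v S' ≤ OPT v K T σ [] := le_csSup hbd_0 ⟨S', rfl⟩
    have hsum1 : schedVal v S ≤ ∑ p ∈ S'.trans ∪ B.toFinset, v p :=
      Finset.sum_le_sum_of_subset_of_nonneg htrans (fun p _ _ => hv p)
    have hsum2 : ∑ p ∈ S'.trans ∪ B.toFinset, v p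
        ≤ schedVal v S' + ∑ p ∈ B.toFinset, v p := by
      rw [← Finset.union_sdiff_self_eq_union, Finset.sum_union Finset.disjoint_sdiff]
      refine add_le_add_right ?_ _
      exact Finset.sum_le_sum_of_subset_of_nonneg Finset.sdiff_subset (fun p _ _ => hv p)
    have hsum3 : ∑ p ∈ B.toFinset, v p = bufVal v B := by
      rw [List.sum_toFinset v hBnodup]; rfl
    have : schedVal v S ≤ schedVal v S' + bufVal v B := by
      rw [← hsum3]; exact hsum1.trans hsum2
    linarith
  exact ⟨by linarith, h1⟩
end
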